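/- Let ρ ≥ 1, L ≥ μ ≥ 0 with L > 0, and L₂ ≥ 0 be reals. Define the feasible set S := {(α,β) : α ≥ 0, β ≥ 0, α² + ρ²β² ≤ 1 + ((β−α)₊)²}, and for each α define T(α) := {(t₁,t₂) : t₁ ≥ t₂ ≥ 0, (1−α²)t₁² + α²t₂² = 1}. Then the infimum over (α,β) ∈ S of the supremum over (t₁,t₂) ∈ T(α) of ((L+μ)/2)·[(1−α²)t₁ + α²t₂] − (L−μ)/2 − t₂·L₂·α·β equals (1/2)·(√((L+μ)² + ρ⁻²·L₂²) − ρ⁻¹·L₂ − (L−μ)); moreover this infimum is attained, and for every (α,β) ∈ S the inner supremum is attained. -/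

import Mathlib

noncomputable section

open Matrix

attribute [local instance] Matrix.normedAddCommGroup Matrix.normedSpace

/-- Euclidean norm on `ℝⁿ`. -/
def enorm {n : ℕ} (x : Fin n → ℝ) : ℝ := Real.sqrt (∑ i, x i ^ 2)

/-- Frobenius norm of a real matrix. -/
def frob {m n : ℕ} (A : Matrix (Fin m) (Fin n) ℝ) : ℝ := Real.sqrt (∑ i, ∑ j, A i j ^ 2)

/-- Trace inner product `⟨A,B⟩ = tr(AᵀB)`. -/
def tip {m n : ℕ} (A B : Matrix (Fin m) (Fin n) ℝ) : ℝ := ∑ i, ∑ j, A i j * B i j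

/-- Spectral (operator) norm: largest singular value. -/
def opNorm {m n : ℕ} (A : Matrix (Fin m) (Fin n) ℝ) : ℝ :=
  sSup {t | ∃ x : Fin n → ℝ, _root_.enorm x ≤ 1 ∧ t = _root_.enorm (A.mulVec x)}

/-- Nuclear norm: `tr √(AᴴA)`, the sum of the singular values. -/
def nucNorm {m n : ℕ} (A : Matrix (Fin m) (Fin n) ℝ) : ℝ :=
  (((Matrix.posSemidef_conjTranspose_mul_self A).1.eigenvectorUnitary : Matrix (Fin n) (Fin n) ℝ) *
    Matrix.diagonal ((RCLike.ofReal : ℝ → ℝ) ∘ Real.sqrt ∘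
      (Matrix.posSemidef_conjTranspose_mul_self A).1.eigenvalues) *
    (star (Matrix.posSemidef_conjTranspose_mul_self A).1.eigenvectorUnitary :
      Matrix (Fin n) (Fin n) ℝ)).trace

/-- The `j`-th largest singular value of a real matrix (`1`-indexed):
the list of square roots of eigenvalues of `AᴴA`, sorted in decreasing order. -/
def singVal {m n : ℕ} (A : Matrix (Fin m) (Fin n) ℝ) (j : ℕ) : ℝ :=
  (((List.ofFn ((show (Aᵀ * A).IsHermitian by
      rw [Matrix.IsHermitian, Matrix.conjTranspose_eq_transpose_of_trivial, Matrix.transpose_mul,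
        Matrix.transpose_transpose]).eigenvalues)).map
      Real.sqrt).insertionSort (· ≥ ·)).getD (j - 1) 0

/-- A second-order critical point of `f`: zero gradient and positive-semidefinite
Hessian quadratic form. -/
def IsSecondOrderCriticalPoint {E : Type*} [NormedAddCommGroup E] [NormedSpace ℝ E]
    (f : E → ℝ) (x : E) : Prop :=
  fderiv ℝ f x = 0 ∧ ∀ v : E, 0 ≤ fderiv ℝ (fun y => fderiv ℝ f y v) x v

/-- The gradient of `φ` at `M`, w.r.t. the trace inner product. -/
def gradM {m n : ℕ} (φ : Matrix (Fin m) (Fin n) ℝ → ℝ) (M : Matrix (Fin m) (Fin n) ℝ) :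
    Matrix (Fin m) (Fin n) ℝ :=
  Matrix.of fun i j => fderiv ℝ φ M (Matrix.single i j 1)

/-- Hessian quadratic form `∇²φ(M)[E,E]`. -/
def hess {m n : ℕ} (φ : Matrix (Fin m) (Fin n) ℝ → ℝ) (M E : Matrix (Fin m) (Fin n) ℝ) : ℝ :=
  fderiv ℝ (fun N => fderiv ℝ φ N E) M E

/-- Adjoint of a linear measurement map, w.r.t. the trace inner product. -/
def adj {m n p : ℕ} (A : Matrix (Fin m) (Fin n) ℝ →ₗ[ℝ] (Fin p → ℝ)) (ξ : Fin p → ℝ) :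
    Matrix (Fin m) (Fin n) ℝ :=
  Matrix.of fun i j => ∑ k, ξ k * A (Matrix.single i j 1) k

/-- The subspace `S_d` of `d × d` real symmetric matrices. -/
def SymSpace (d : ℕ) : Submodule ℝ (Matrix (Fin d) (Fin d) ℝ) where
  carrier := {A | Aᵀ = A}
  add_mem' := by intro a b ha hb; simp only [Set.mem_setOf_eq, Matrix.transpose_add] at *
                 rw [ha, hb]
  zero_mem' := by simp
  smul_mem' := by intro c A hA; simp only [Set.mem_setOf_eq, Matrix.transpose_smul] at *
                  rw [hA]

lemma mem_symSpace {d : ℕ} {A : Matrix (Fin d) (Fin d) ℝ} : A ∈ SymSpace d ↔ Aᵀ = A := Iff.rfl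

lemma stdBasis_symm {d : ℕ} (i j : Fin d) :
    Matrix.single i j (1:ℝ) + Matrix.single j i 1 ∈ SymSpace d := by
  rw [mem_symSpace, Matrix.transpose_add]
  ext a b
  simp only [Matrix.add_apply, Matrix.transpose_apply, Matrix.single, Matrix.of_apply]
  rw [add_comm]
  congr 1 <;> · congr 1; rw [eq_iff_iff, and_comm]

/-- The symmetrized elementary matrix `E_ij + E_ji` as an element of `S_d`. -/
def symBasis {d : ℕ} (i j : Fin d) : SymSpace d :=
  ⟨Matrix.single i j 1 + Matrix.single j i 1, stdBasis_symm i j⟩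

lemma mmT_mem {d r : ℕ} (U : Matrix (Fin d) (Fin r) ℝ) : U * Uᵀ ∈ SymSpace d := by
  rw [mem_symSpace, Matrix.transpose_mul, Matrix.transpose_transpose]

/-- `U ↦ UUᵀ` as an element of `S_d`. -/
def mmT {d r : ℕ} (U : Matrix (Fin d) (Fin r) ℝ) : SymSpace d := ⟨U * Uᵀ, mmT_mem U⟩

/-- The gradient of `φ : S_d → ℝ` at `M`, as the symmetric matrix representing the
derivative w.r.t. the trace inner product on `S_d`. -/
def gradS {d : ℕ} (φ : SymSpace d → ℝ) (M : SymSpace d) : Matrix (Fin d) (Fin d) ℝ :=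
  Matrix.of fun i j => (1/2) * fderiv ℝ φ M (symBasis i j)

/-- Hessian quadratic form of `φ : S_d → ℝ`. -/
def hessS {d : ℕ} (φ : SymSpace d → ℝ) (M E : SymSpace d) : ℝ :=
  fderiv ℝ (fun N => fderiv ℝ φ N E) M E

/-- Adjoint of a linear map `𝒜 : S_d → ℝⁿ` w.r.t. the trace inner product on `S_d`. -/
def adjS {d p : ℕ} (A : SymSpace d →ₗ[ℝ] (Fin p → ℝ)) (ξ : Fin p → ℝ) :
    Matrix (Fin d) (Fin d) ℝ :=
  Matrix.of fun i j => (1/2) * ∑ k, ξ k * A (symBasis i j) k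

/-- `P` is the orthogonal projection matrix onto the column space of `U`:
it is symmetric, idempotent, and has the same range as `U`. -/
def IsOrthProjCol {d r : ℕ} (P : Matrix (Fin d) (Fin d) ℝ) (U : Matrix (Fin d) (Fin r) ℝ) :
    Prop :=
  Pᵀ = P ∧ P * P = P ∧ P * U = U ∧ ∃ W : Matrix (Fin r) (Fin d) ℝ, P = U * W



set_option maxHeartbeats 1600000 in
/-- Inner sup computation. -/
lemma aux_inner (P C L₂ β α : ℝ) (hP : 0 < P) (hc : 0 ≤ L₂ * β)
    (hα0 : 0 ≤ α) (hα1 : α ≤ 1) (hor : α < 1 ∨ L₂ * β ≤ P * α) :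
    IsGreatest {v : ℝ | ∃ t₁ t₂ : ℝ, t₂ ≤ t₁ ∧ 0 ≤ t₂ ∧ (1 - α^2)*t₁^2 + α^2*t₂^2 = 1 ∧
        v = P * ((1 - α^2)*t₁ + α^2*t₂) - C - t₂*L₂*α*β}
      (Real.sqrt (P^2*(1-α^2) + (max (P*α - L₂*β) 0)^2) - C) := by
  rcases eq_or_lt_of_le hα0 with hα|hα
  · -- α = 0
    have hα' : α = 0 := hα.symm
    subst hα'
    have hmax : max (P*0 - L₂*β) 0 = 0 := max_eq_right (by nlinarith)
    have hFv : Real.sqrt (P^2*(1-(0:ℝ)^2) + (max (P*0 - L₂*β) 0)^2) = P := by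
      rw [hmax]
      norm_num
      exact Real.sqrt_sq hP.le
    rw [hFv]
    constructor
    · exact ⟨1, 0, by norm_num, le_refl 0, by norm_num, by norm_num⟩
    · rintro v ⟨t₁, t₂, ht21, ht2, hcon, rfl⟩
      have ht1 : t₁ = 1 := by nlinarith [hcon]
      rw [ht1]; norm_num
  · -- 0 < α
    by_cases hK : L₂*β ≤ P*α
    · -- nonnegative K
      set K := P*α - L₂*β with hKdef
      have hK0 : 0 ≤ K := by rw [hKdef]; linarith
      have hmax : max (P*α - L₂*β) 0 = K := max_eq_left hK0
      rw [hmax]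
      rcases eq_or_lt_of_le hα1 with hα1'|hα1'
      · -- α = 1
        subst hα1'
        have hFv : Real.sqrt (P^2*(1-(1:ℝ)^2) + K^2) = K := by
          norm_num
          exact Real.sqrt_sq hK0
        rw [hFv]
        constructor
        · refine ⟨1, 1, le_refl 1, zero_le_one, by norm_num, ?_⟩
          rw [hKdef]; ring
        · rintro v ⟨t₁, t₂, ht21, ht2, hcon, rfl⟩
          norm_num at hcon
          rcases hcon with h|h
          · exact le_of_eq (by rw [h, hKdef]; ring)
          · linarith
      · -- α < 1
        set A := 1 - α^2 with hAdef
        have hA : 0 < A := by rw [hAdef]; nlinarith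
        have hK2 : K ≤ P*α := by rw [hKdef]; linarith
        set lam := Real.sqrt (P^2*A + K^2) with hlamdef
        have hlam2 : lam^2 = P^2*A + K^2 := Real.sq_sqrt (by positivity)
        have hlampos : 0 < lam := Real.sqrt_pos.2 (by positivity)
        constructor
        · refine ⟨P/lam, K/(α*lam), ?_, by positivity, ?_, ?_⟩
          · rw [div_le_div_iff₀ (by positivity) hlampos]
            nlinarith [mul_le_mul_of_nonneg_right hK2 hlampos.le]
          · have h : A*(P/lam)^2 + α^2*(K/(α*lam))^2 = (P^2*A + K^2)/lam^2 := by
              field_simp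
            rw [h, ← hlam2, div_self (by positivity)]
          · have h : P*(A*(P/lam) + α^2*(K/(α*lam))) - K/(α*lam)*L₂*α*β
                = (P^2*A + K*(P*α - L₂*β))/lam := by
              field_simp; ring
            rw [show P*(A*(P/lam) + α^2*(K/(α*lam))) - C - K/(α*lam)*L₂*α*β
                = (P*(A*(P/lam) + α^2*(K/(α*lam))) - K/(α*lam)*L₂*α*β) - C by ring, h,
              ← hKdef, show P^2*A + K*K = P^2*A + K^2 by ring, ← hlam2]
            rw [sq, mul_div_assoc, div_self hlampos.ne', mul_one]
        · rintro v ⟨t₁, t₂, ht21, ht2, hcon, rfl⟩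
          have hobj : P * (A*t₁ + α^2*t₂) - C - t₂*L₂*α*β
              = P*A*t₁ + α*K*t₂ - C := by rw [hKdef]; ring
          rw [hobj]
          have hident : α^2*(A*lam*t₁ - P*A)^2 + A*(α^2*lam*t₂ - α*K)^2
              = 2*A*α^2*lam*(lam - (P*A*t₁ + α*K*t₂)) := by
            linear_combination (A*α^2*lam^2)*hcon - (A*α^2)*hlam2
          have h1 : 0 ≤ α^2*(A*lam*t₁ - P*A)^2 + A*(α^2*lam*t₂ - α*K)^2 := by positivity
          nlinarith [mul_pos (mul_pos (mul_pos (by norm_num : (0:ℝ) < 2) hA)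
            (by positivity : (0:ℝ) < α^2)) hlampos]
    · -- K < 0 : L₂β > Pα
      push_neg at hK
      have hα1' : α < 1 := by
        rcases hor with h|h
        · exact h
        · linarith
      have hmax : max (P*α - L₂*β) 0 = 0 := max_eq_right (by linarith)
      rw [hmax]
      set A := 1 - α^2 with hAdef
      have hA : 0 < A := by rw [hAdef]; nlinarith
      set s := Real.sqrt A with hsdef
      have hs2 : s^2 = A := Real.sq_sqrt hA.le
      have hs : 0 < s := Real.sqrt_pos.2 hA
      have hFv : Real.sqrt (P^2*A + 0^2) = P*s := by
        rw [← hs2, show P^2*s^2 + 0^2 = (P*s)^2 by ring]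
        exact Real.sqrt_sq (by positivity)
      rw [hFv]
      constructor
      · refine ⟨1/s, 0, by positivity, le_refl 0, ?_, ?_⟩
        · rw [← hs2]
          field_simp
          simp
        · rw [← hs2]
          field_simp
          ring
      · rintro v ⟨t₁, t₂, ht21, ht2, hcon, rfl⟩
        have ht10 : 0 ≤ t₁ := le_trans ht2 ht21
        have hA2 : s^2*t₁^2 ≤ 1 := by
          rw [hs2]; nlinarith [hcon, sq_nonneg (α*t₂)]
        have ht1s : s*t₁ ≤ 1 := by
          nlinarith [hA2, mul_nonneg hs.le ht10]
        have h1 : P*(A*t₁) ≤ P*s := by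
          calc P*(A*t₁) = (P*s)*(s*t₁) := by rw [← hs2]; ring
            _ ≤ (P*s)*1 := mul_le_mul_of_nonneg_left ht1s (by positivity)
            _ = P*s := mul_one _
        have h2 : P*(α^2*t₂) - t₂*L₂*α*β ≤ 0 := by
          have e : P*(α^2*t₂) - t₂*L₂*α*β = -((t₂*α)*(L₂*β - P*α)) := by ring
          rw [e, neg_nonpos]
          exact mul_nonneg (mul_nonneg ht2 hα.le) (by linarith)
        linarith [h1, h2]


set_option maxHeartbeats 1600000 in
/-- Lower bound: F² ≤ P²(1-α²) + max(Pα - L₂β,0)². -/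
lemma aux_lower (ρ P q F L₂ α β : ℝ) (hρ : 1 ≤ ρ) (hq : 0 ≤ q) (hL₂ : L₂ = q*ρ)
    (hF : 0 ≤ F) (hPF : F^2 + q*F = P^2) (hP : 0 < P) (hα : 0 ≤ α) (hβ : 0 ≤ β)
    (hfeas : α^2 + ρ^2*β^2 ≤ 1 + (max (β - α) 0)^2) :
    F^2 ≤ P^2*(1-α^2) + (max (P*α - L₂*β) 0)^2 := by
  have hρ0 : 0 < ρ := lt_of_lt_of_le one_pos hρ
  have hρ21 : (0:ℝ) ≤ ρ^2 - 1 := by nlinarith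
  have hFP : F ≤ P := by nlinarith
  subst hL₂
  rcases le_or_gt (q*ρ*β) (P*α) with hK|hK
  · -- K ≥ 0
    rw [max_eq_left (by linarith)]
    rcases le_or_gt β α with hba|hba
    · -- β ≤ α; constraint: α² + ρ²β² ≤ 1
      rw [max_eq_right (by linarith)] at hfeas
      norm_num at hfeas
      have hid : (F + q*(ρ*β)^2)^2 - (2*P*(ρ*β)*α)^2
          = (F*(1 - 2*(ρ*β)^2) - q*(ρ*β)^2)^2 + 4*P^2*(ρ*β)^2*(1 - α^2 - (ρ*β)^2) := by
        linear_combination (4*(ρ*β)^2*(1-(ρ*β)^2))*hPF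
      have h2 : (0:ℝ) ≤ 4*P^2*(ρ*β)^2*(1 - α^2 - (ρ*β)^2) := by
        apply mul_nonneg (by positivity)
        nlinarith [hfeas]
      have hsq : (2*P*(ρ*β)*α)^2 ≤ (F + q*(ρ*β)^2)^2 := by
        nlinarith [hid, h2, sq_nonneg (F*(1 - 2*(ρ*β)^2) - q*(ρ*β)^2)]
      have key : 2*P*(ρ*β)*α ≤ F + q*(ρ*β)^2 := by
        nlinarith [hsq, mul_nonneg (mul_nonneg (mul_nonneg (by norm_num : (0:ℝ) ≤ 2) hP.le)
          (mul_nonneg hρ0.le hβ)) hα, hF, mul_nonneg hq (sq_nonneg (ρ*β))]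
      nlinarith [mul_le_mul_of_nonneg_left key hq]
    · -- β > α
      rw [max_eq_left (by linarith)] at hfeas
      have h2ab : 2*α*β + (ρ^2-1)*β^2 ≤ 1 := by nlinarith [hfeas]
      have hFq : P ≤ F + q := by nlinarith
      have h2F : 2*P ≤ 2*F + q := by nlinarith
      have hW : 0 ≤ F*(ρ^2+1) + q*ρ^2 - 2*P*ρ := by
        nlinarith [mul_nonneg (by linarith : (0:ℝ) ≤ ρ - 1)
          (show (0:ℝ) ≤ (F+q)*(ρ+1) - 2*P by
            nlinarith [mul_nonneg (by linarith : (0:ℝ) ≤ F + q) (by linarith : (0:ℝ) ≤ ρ - 1)])]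
      have key : 2*P*ρ*α*β ≤ F + q*ρ^2*β^2 := by
        rcases le_or_gt (β^2*(ρ^2+1)) 1 with hb2|hb2
        · nlinarith [mul_nonneg (sq_nonneg β) hW,
            mul_nonneg hF (by linarith : (0:ℝ) ≤ 1 - β^2*(ρ^2+1)),
            mul_nonneg (mul_nonneg (mul_nonneg (by linarith : (0:ℝ) ≤ 2*P) hρ0.le)
              (by linarith : (0:ℝ) ≤ β - α)) hβ]
        · have hX : (0:ℝ) ≤ q*ρ^2 + P*ρ*(ρ^2-1) := by
            nlinarith [mul_nonneg hq (sq_nonneg ρ), mul_nonneg (mul_nonneg hP.le hρ0.le) hρ21]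
          have hB : (0:ℝ) ≤ P*ρ*(1 - 2*α*β - (ρ^2-1)*β^2) :=
            mul_nonneg (mul_nonneg hP.le hρ0.le) (by linarith)
          nlinarith [mul_nonneg (by linarith : (0:ℝ) ≤ β^2*(ρ^2+1) - 1) hX, hB,
            mul_nonneg (sq_nonneg ρ) hB, hW, sq_nonneg ρ]
      nlinarith [mul_le_mul_of_nonneg_left key hq]
  · -- K < 0 : goal F² ≤ P²(1-α²), i.e. P²α² ≤ qF
    rw [max_eq_right (by linarith)]
    have hq0 : 0 < q := by
      rcases lt_or_eq_of_le hq with h|h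
      · exact h
      · exfalso
        rw [← h] at hK
        nlinarith [mul_nonneg hP.le hα]
    have hβ0 : 0 < β := by
      nlinarith [mul_nonneg hP.le hα, mul_pos hq0 hρ0]
    have hF0 : 0 < F := by
      rcases lt_or_eq_of_le hF with h|h
      · exact h
      · exfalso
        rw [← h] at hPF
        nlinarith
    have hgoal : P^2*α^2 ≤ q*F → F^2 ≤ P^2*(1-α^2) + 0^2 := by
      intro h; nlinarith
    apply hgoal
    rcases le_or_gt β α with hba|hba
    · -- β ≤ α
      rw [max_eq_right (by linarith)] at hfeas
      norm_num at hfeas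
      have h1 : P^2*α^2 ≤ q^2*ρ^2*β^2 := by
        nlinarith [mul_le_mul hK.le hK.le (mul_nonneg hP.le hα)
          (mul_nonneg (mul_nonneg hq hρ0.le) hβ)]
      have h2 : α^2*(P^2+q^2) ≤ q^2 := by
        nlinarith [h1, mul_le_mul_of_nonneg_left hfeas (sq_nonneg q)]
      have h3 : P^2*q ≤ F*(P^2+q^2) := by
        have e : F*(P^2+q^2) - P^2*q = F^3 := by linear_combination (q-F)*hPF
        nlinarith [e, pow_pos hF0 3]
      have h4 : P^2*α^2*(P^2+q^2) ≤ q*F*(P^2+q^2) := by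
        nlinarith [mul_le_mul_of_nonneg_left h2 (sq_nonneg P),
          mul_le_mul_of_nonneg_left h3 hq]
      exact le_of_mul_le_mul_right h4 (by positivity)
    · -- β > α
      rw [max_eq_left (by linarith)] at hfeas
      have h2ab : 2*α*β + (ρ^2-1)*β^2 ≤ 1 := by nlinarith [hfeas]
      rcases le_or_gt F q with hFq|hFq
      · -- F ≤ q : P² ≤ 2qF and 2α² ≤ 1
        have hP2 : P^2 ≤ 2*q*F := by nlinarith
        have ha2 : 2*α^2 ≤ 1 := by
          nlinarith [mul_nonneg hρ21 (sq_nonneg β),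
            mul_nonneg (by linarith : (0:ℝ) ≤ β - α) hα]
        nlinarith [mul_le_mul_of_nonneg_right hP2 (sq_nonneg α)]
      · -- q < F : P² ≤ 2F²
        have h2F2 : P^2 ≤ 2*F^2 := by nlinarith
        have hP2F : P ≤ 2*F := by nlinarith
        have hKle : P*α ≤ q*ρ*β := hK.le
        have hone : (0:ℝ) ≤ 1 - (ρ^2-1)*β^2 := by nlinarith [mul_nonneg hα hβ]
        have hmain : 2*P^2*α^2*β ≤ P*q*ρ*β*(1 - (ρ^2-1)*β^2) := by
          nlinarith [mul_le_mul_of_nonneg_left hKle (mul_nonneg hP.le hone),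
            mul_le_mul_of_nonneg_left h2ab (mul_nonneg (sq_nonneg P) hα)]
        have hx2 : P^2*α^2 ≤ q^2*ρ^2*β^2 := by
          nlinarith [mul_le_mul hKle hKle (mul_nonneg hP.le hα)
            (mul_nonneg (mul_nonneg hq hρ0.le) hβ)]
        have hcombβ : β*(P^2*α^2*(2*q*ρ + P*(ρ^2-1))) ≤ β*(q^2*ρ^2*P) := by
          nlinarith [mul_le_mul_of_nonneg_left hx2
            (mul_nonneg (mul_nonneg hP.le hβ) hρ21),
            mul_le_mul_of_nonneg_left hmain (mul_nonneg hq hρ0.le)]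
        have hcomb : P^2*α^2*(2*q*ρ + P*(ρ^2-1)) ≤ q^2*ρ^2*P :=
          le_of_mul_le_mul_left hcombβ hβ0
        have hN : q*ρ^2*P ≤ 2*q*ρ*F + F*P*(ρ^2-1) := by
          nlinarith [mul_nonneg (mul_nonneg hq hF) (by linarith : (0:ℝ) ≤ ρ - 1),
            mul_nonneg (mul_nonneg hP.le (by linarith : (0:ℝ) ≤ F - q)) hρ21,
            mul_nonneg hq (by linarith : (0:ℝ) ≤ 2*F - P)]
        have hpos : 0 < 2*q*ρ + P*(ρ^2-1) := by
          nlinarith [mul_pos hq0 hρ0, mul_nonneg hP.le hρ21]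
        have hNq := mul_le_mul_of_nonneg_left hN hq
        have hfin : P^2*α^2*(2*q*ρ + P*(ρ^2-1)) ≤ q*F*(2*q*ρ + P*(ρ^2-1)) := by
          nlinarith [hcomb, hNq]
        exact le_of_mul_le_mul_right hfin hpos

set_option maxHeartbeats 1600000 in
/-- Lemma: the min–max optimization value. -/
theorem minmax_value
    (ρ L μ L₂ : ℝ) (hρ : 1 ≤ ρ) (hμ0 : 0 ≤ μ) (hμL : μ ≤ L) (hL : 0 < L) (hL₂ : 0 ≤ L₂) :
    (∀ α β : ℝ, 0 ≤ α → 0 ≤ β → α^2 + ρ^2 * β^2 ≤ 1 + (max (β - α) 0)^2 →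
      IsGreatest {v : ℝ | ∃ t₁ t₂ : ℝ, t₂ ≤ t₁ ∧ 0 ≤ t₂ ∧ (1 - α^2)*t₁^2 + α^2*t₂^2 = 1 ∧
          v = (L + μ)/2 * ((1 - α^2)*t₁ + α^2*t₂) - (L - μ)/2 - t₂*L₂*α*β}
        (sSup {v : ℝ | ∃ t₁ t₂ : ℝ, t₂ ≤ t₁ ∧ 0 ≤ t₂ ∧ (1 - α^2)*t₁^2 + α^2*t₂^2 = 1 ∧
          v = (L + μ)/2 * ((1 - α^2)*t₁ + α^2*t₂) - (L - μ)/2 - t₂*L₂*α*β})) ∧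
    IsLeast {w : ℝ | ∃ α β : ℝ, 0 ≤ α ∧ 0 ≤ β ∧ α^2 + ρ^2*β^2 ≤ 1 + (max (β - α) 0)^2 ∧
        w = sSup {v : ℝ | ∃ t₁ t₂ : ℝ, t₂ ≤ t₁ ∧ 0 ≤ t₂ ∧ (1 - α^2)*t₁^2 + α^2*t₂^2 = 1 ∧
          v = (L + μ)/2 * ((1 - α^2)*t₁ + α^2*t₂) - (L - μ)/2 - t₂*L₂*α*β}}
      ((1/2) * (Real.sqrt ((L + μ)^2 + L₂^2/ρ^2) - L₂/ρ - (L - μ))) := by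
  have hρ0 : 0 < ρ := lt_of_lt_of_le one_pos hρ
  have hρ21 : (0:ℝ) ≤ ρ^2 - 1 := by nlinarith
  have hP : 0 < (L+μ)/2 := by linarith
  have hq : 0 ≤ L₂/ρ := div_nonneg hL₂ hρ0.le
  have hL₂q : L₂ = (L₂/ρ)*ρ := by field_simp
  set R := Real.sqrt ((L+μ)^2 + L₂^2/ρ^2) with hRdef
  have hR2 : R^2 = (L+μ)^2 + L₂^2/ρ^2 := Real.sq_sqrt (by positivity)
  have hR0 : 0 ≤ R := Real.sqrt_nonneg _
  have hq2 : (L₂/ρ)^2 = L₂^2/ρ^2 := by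
    field_simp
  have hRq : L₂/ρ ≤ R := by
    nlinarith [hR2, hq2, hq, hR0,
      mul_pos (by linarith : (0:ℝ) < L+μ) (by linarith : (0:ℝ) < L+μ)]
  set F := (R - L₂/ρ)/2 with hFdef
  have hF0 : 0 ≤ F := by rw [hFdef]; linarith
  have hPF : F^2 + (L₂/ρ)*F = ((L+μ)/2)^2 := by
    rw [hFdef]; linear_combination hR2/4 - hq2/4
  have hFpos : 0 < F := by
    rcases lt_or_eq_of_le hF0 with h|h
    · exact h
    · exfalso; rw [← h] at hPF; nlinarith
  have halpha : ∀ a b : ℝ, 0 ≤ a → 0 ≤ b → a^2 + ρ^2*b^2 ≤ 1 + (max (b-a) 0)^2 →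
      a ≤ 1 ∧ (a < 1 ∨ L₂*b ≤ (L+μ)/2*a) := by
    intro a b ha hb hfe
    rcases le_or_gt b a with h|h
    · rw [max_eq_right (by linarith)] at hfe
      norm_num at hfe
      have ha1 : a ≤ 1 := by nlinarith [mul_nonneg (sq_nonneg ρ) (sq_nonneg b)]
      refine ⟨ha1, ?_⟩
      rcases lt_or_eq_of_le ha1 with h1|h1
      · exact Or.inl h1
      · right
        have hb2 : b^2 ≤ 0 := by nlinarith
        have hb0 : b = 0 := le_antisymm (by nlinarith) hb
        subst hb0
        simp
        positivity
    · rw [max_eq_left (by linarith)] at hfe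
      have h2ab : 2*a*b + (ρ^2-1)*b^2 ≤ 1 := by nlinarith [hfe]
      have ha2 : 2*a^2 ≤ 1 := by
        nlinarith [mul_nonneg hρ21 (sq_nonneg b), mul_nonneg (by linarith : (0:ℝ) ≤ b - a) ha]
      have ha1 : a < 1 := by nlinarith
      exact ⟨ha1.le, Or.inl ha1⟩
  constructor
  · intro α β hα hβ hfeas
    obtain ⟨hα1, hor⟩ := halpha α β hα hβ hfeas
    have hg := aux_inner ((L+μ)/2) ((L-μ)/2) L₂ β α hP (mul_nonneg hL₂ hβ) hα hα1 hor
    rw [hg.csSup_eq]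
    exact hg
  · constructor
    · -- membership : the minimizer
      set σ := Real.sqrt (((L+μ)/2)^2 + F^2) with hσdef
      have hσ2 : σ^2 = ((L+μ)/2)^2 + F^2 := Real.sq_sqrt (by positivity)
      have hσ : 0 < σ := Real.sqrt_pos.2 (by positivity)
      have hα1 : (L+μ)/2/σ < 1 := by
        rw [div_lt_one hσ]
        nlinarith [hσ2, hσ, hP]
      refine ⟨(L+μ)/2/σ, F/(ρ*σ), by positivity, by positivity, ?_, ?_⟩
      · have he : ((L+μ)/2/σ)^2 + ρ^2*(F/(ρ*σ))^2 = 1 := by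
          have e1 : ((L+μ)/2/σ)^2 + ρ^2*(F/(ρ*σ))^2 = (((L+μ)/2)^2 + F^2)/σ^2 := by
            field_simp
          rw [e1, ← hσ2, div_self (pow_ne_zero 2 hσ.ne')]
        have hm := sq_nonneg (max (F/(ρ*σ) - (L+μ)/2/σ) 0)
        linarith [he, hm]
      · have hg := aux_inner ((L+μ)/2) ((L-μ)/2) L₂ (F/(ρ*σ)) ((L+μ)/2/σ) hP
          (mul_nonneg hL₂ (by positivity)) (by positivity) hα1.le (Or.inl hα1)
        rw [hg.csSup_eq]
        have hKst : (L+μ)/2*((L+μ)/2/σ) - L₂*(F/(ρ*σ)) = F^2/σ := by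
          have e1 : (L+μ)/2*((L+μ)/2/σ) - L₂*(F/(ρ*σ)) = (((L+μ)/2)^2 - (L₂/ρ)*F)/σ := by
            field_simp
          rw [e1, show ((L+μ)/2)^2 - (L₂/ρ)*F = F^2 by linarith [hPF]]
        have hmax : max ((L+μ)/2*((L+μ)/2/σ) - L₂*(F/(ρ*σ))) 0 = F^2/σ := by
          rw [hKst]; exact max_eq_left (by positivity)
        have hin : ((L+μ)/2)^2*(1 - ((L+μ)/2/σ)^2) + (F^2/σ)^2 = F^2 := by
          have e2 : ((L+μ)/2)^2*(1 - ((L+μ)/2/σ)^2) + (F^2/σ)^2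
              = (((L+μ)/2)^2*(σ^2 - ((L+μ)/2)^2) + F^4)/σ^2 := by
            field_simp
          rw [e2, hσ2,
            show ((L+μ)/2)^2*((((L+μ)/2)^2 + F^2) - ((L+μ)/2)^2) + F^4
              = F^2*(((L+μ)/2)^2 + F^2) by ring,
            mul_div_assoc, div_self (by positivity), mul_one]
        rw [hmax, hin, Real.sqrt_sq hF0, hFdef]
        ring
    · -- lower bound
      rintro w ⟨α, β, hα, hβ, hfeas, rfl⟩
      obtain ⟨hα1, hor⟩ := halpha α β hα hβ hfeas
      have hg := aux_inner ((L+μ)/2) ((L-μ)/2) L₂ β α hP (mul_nonneg hL₂ hβ) hα hα1 hor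
      rw [hg.csSup_eq]
      have hlow := aux_lower ρ ((L+μ)/2) (L₂/ρ) F L₂ α β hρ hq hL₂q hF0 hPF hP hα hβ hfeas
      have hsq : F ≤ Real.sqrt (((L+μ)/2)^2*(1-α^2) + (max ((L+μ)/2*α - L₂*β) 0)^2) := by
        rw [show F = Real.sqrt (F^2) from (Real.sqrt_sq hF0).symm]
        exact Real.sqrt_le_sqrt hlow
      linarith [hsq, hFdef]

end
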